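/- Projection of a forbidden interval when the high sub-slice is fixed (Lemma 2, parts (5)–(6)): let u, v ≥ 1, let n : BitVec u be fixed, let l, h : BitVec (u+v), and define, for β ∈ {l, h}, the bit-vector β_z : BitVec v by β_z.toNat = β.toNat mod 2^v if ⌊β.toNat / 2^v⌋ = n.toNat, and β_z = 0 otherwise. Then: (i) if l_z ≠ h_z, then for every z : BitVec v with n ++ z ∉ [l,h[ one has z ∉ [l_z, h_z[; (ii) if l_z = h_z and n ++ (0 : BitVec v) ∈ [l,h[, then every z : BitVec v satisfies n ++ z ∈ [l,h[ (so the constraint x ∉ [l,h[ together with the fixed high slice n is unsatisfiable). -/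

import Mathlib

/-- Membership in a wrapping half-open interval `[l, h[` over `BitVec w`. -/
def inInterval {w : ℕ} (t l h : BitVec w) : Prop := t - l < h - l

/-- `βz n β` equals `β mod 2^v` if the high part of `β` equals `n`, and `0` otherwise. -/
def βz {u v : ℕ} (n : BitVec u) (β : BitVec (u + v)) : BitVec v :=
  if β.toNat / 2 ^ v = n.toNat then BitVec.ofNat v (β.toNat % 2 ^ v) else 0

private lemma aux_mod_two (x m : ℕ) (hm : 0 < m) (hx : x < 2*m) :
    ∃ t, x % m = t ∧ ((x < m ∧ t = x) ∨ (m ≤ x ∧ t + m = x)) := by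
  rcases Nat.lt_or_ge x m with h | h
  · exact ⟨x % m, rfl, Or.inl ⟨h, Nat.mod_eq_of_lt h⟩⟩
  · refine ⟨x % m, rfl, Or.inr ⟨h, ?_⟩⟩
    rw [Nat.mod_eq_sub_mod h, Nat.mod_eq_of_lt (by omega)]
    omega

private lemma aux_if_bit (c : Prop) [Decidable c] :
    ∃ t : ℕ, (if c then 1 else 0) = t ∧ ((c ∧ t = 1) ∨ (¬ c ∧ t = 0)) := by
  by_cases h : c
  · exact ⟨1, if_pos h, Or.inl ⟨h, rfl⟩⟩
  · exact ⟨0, if_neg h, Or.inr ⟨h, rfl⟩⟩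

private lemma aux_if_val (c : Prop) [Decidable c] (x : ℕ) :
    ∃ t : ℕ, (if c then x else 0) = t ∧ ((c ∧ t = x) ∨ (¬ c ∧ t = 0)) := by
  by_cases h : c
  · exact ⟨x, if_pos h, Or.inl ⟨h, rfl⟩⟩
  · exact ⟨0, if_neg h, Or.inr ⟨h, rfl⟩⟩

private lemma aux_mod_mul_decomp (P Q m r : ℕ) (hP : 0 < P) (hr : r < Q) :
    (m * Q + r) % (P * Q) = (m % P) * Q + r := by
  have hm := Nat.div_add_mod m P
  have h1 : m * Q + r = (m / P) * (P * Q) + ((m % P) * Q + r) := by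
    calc m * Q + r = (P * (m / P) + m % P) * Q + r := by rw [hm]
    _ = (m / P) * (P * Q) + ((m % P) * Q + r) := by ring
  rw [h1, Nat.add_comm, Nat.add_mul_mod_self_right]
  apply Nat.mod_eq_of_lt
  have h2 : m % P < P := Nat.mod_lt _ hP
  calc (m % P) * Q + r < (m % P) * Q + Q := by omega
  _ = (m % P + 1) * Q := by ring
  _ ≤ P * Q := Nat.mul_le_mul_right _ (by omega)

private lemma aux_sub_decomp (P Q NX ZX A a : ℕ) (hP : 0 < P) (hQ : 0 < Q)
    (hNX : NX < P) (hA : A < P) (hZX : ZX < Q) (ha : a < Q) :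
    (P * Q - (A * Q + a) + (NX * Q + ZX)) % (P * Q)
      = ((NX + P - A - (if ZX < a then 1 else 0)) % P) * Q + (Q - a + ZX) % Q := by
  have hle : A * Q + a ≤ P * Q := by
    calc A * Q + a ≤ A * Q + Q := by omega
    _ = (A + 1) * Q := by ring
    _ ≤ P * Q := Nat.mul_le_mul_right _ (by omega)
  rcases Nat.lt_or_ge ZX a with hc | hc
  · rw [if_pos hc]
    obtain ⟨k, hk⟩ : ∃ k, NX + P = A + 1 + k := ⟨NX + P - A - 1, by omega⟩
    have hk' : (NX : ℤ) + (P : ℤ) = (A : ℤ) + 1 + (k : ℤ) := by exact_mod_cast hk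
    have harg : P * Q - (A * Q + a) + (NX * Q + ZX) = k * Q + (Q - a + ZX) := by
      zify [hle, Nat.le_of_lt ha]
      linear_combination (Q : ℤ) * hk'
    have hr : Q - a + ZX < Q := by omega
    rw [harg, aux_mod_mul_decomp P Q k _ hP hr, Nat.mod_eq_of_lt hr,
      show NX + P - A - 1 = k from by omega]
  · rw [if_neg (by omega)]
    obtain ⟨k, hk⟩ : ∃ k, NX + P = A + k := ⟨NX + P - A, by omega⟩
    have hk' : (NX : ℤ) + (P : ℤ) = (A : ℤ) + (k : ℤ) := by exact_mod_cast hk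
    have harg : P * Q - (A * Q + a) + (NX * Q + ZX) = k * Q + (ZX - a) := by
      zify [hle, hc]
      linear_combination (Q : ℤ) * hk'
    have hr : ZX - a < Q := by omega
    rw [harg, aux_mod_mul_decomp P Q k _ hP hr,
      show Q - a + ZX = (ZX - a) + Q from by omega, Nat.add_mod_right,
      Nat.mod_eq_of_lt hr, show NX + P - A - 0 = k from by omega]

private lemma aux_pair_lt (Q m1 r1 m2 r2 : ℕ) (h1 : r1 < Q) (h2 : r2 < Q) :
    m1 * Q + r1 < m2 * Q + r2 ↔ (m1 < m2 ∨ (m1 = m2 ∧ r1 < r2)) := by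
  constructor
  · intro h
    rcases lt_trichotomy m1 m2 with h' | h' | h'
    · exact Or.inl h'
    · subst h'
      exact Or.inr ⟨rfl, lt_of_add_lt_add_left h⟩
    · exfalso
      have : m2 * Q + r2 < m1 * Q + r1 := by
        calc m2 * Q + r2 < m2 * Q + Q := by omega
        _ = (m2 + 1) * Q := by ring
        _ ≤ m1 * Q := Nat.mul_le_mul_right _ (by omega)
        _ ≤ m1 * Q + r1 := Nat.le_add_right _ _
      omega
  · rintro (h | ⟨rfl, h⟩)
    · calc m1 * Q + r1 < m1 * Q + Q := by omega
      _ = (m1 + 1) * Q := by ring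
      _ ≤ m2 * Q := Nat.mul_le_mul_right _ (by omega)
      _ ≤ m2 * Q + r2 := Nat.le_add_right _ _
    · exact Nat.add_lt_add_left h _

private lemma aux_split (Q L P : ℕ) (hQ : 0 < Q) (hL : L < P * Q) :
    ∃ A a, L / Q = A ∧ L % Q = a ∧ L = A * Q + a ∧ A < P ∧ a < Q := by
  refine ⟨L / Q, L % Q, rfl, rfl, ?_, ?_, Nat.mod_lt _ hQ⟩
  · rw [Nat.mul_comm]
    exact (Nat.div_add_mod L Q).symm
  · exact (Nat.div_lt_iff_lt_mul hQ).mpr hL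

private lemma aux_mod_two' (x m : ℕ) (hm : 0 < m) (hx : x < 2*m) :
    (x < m ∧ x % m = x) ∨ (m ≤ x ∧ x % m + m = x) := by
  rcases Nat.lt_or_ge x m with h | h
  · exact Or.inl ⟨h, Nat.mod_eq_of_lt h⟩
  · refine Or.inr ⟨h, ?_⟩
    rw [Nat.mod_eq_sub_mod h, Nat.mod_eq_of_lt (by omega)]
    omega

private lemma aux_claim1 (P Q N L H Z : ℕ) (hP : 2 ≤ P) (hQ : 1 ≤ Q) (hN : N < P)
    (hL : L < P * Q) (hH : H < P * Q) (hZ : Z < Q)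
    (hne : (if L / Q = N then L % Q else 0) ≠ (if H / Q = N then H % Q else 0))
    (hlow : (Q - (if L / Q = N then L % Q else 0) + Z) % Q
          < (Q - (if L / Q = N then L % Q else 0) + (if H / Q = N then H % Q else 0)) % Q) :
    (P * Q - L + (N * Q + Z)) % (P * Q) < (P * Q - L + H) % (P * Q) := by
  have hQ0 : 0 < Q := hQ
  have hP0 : 0 < P := by omega
  obtain ⟨A, a, hAd, had, hLsum, hA, ha⟩ := aux_split Q L P hQ0 hL
  obtain ⟨B, b, hBd, hbd, hHsum, hB, hb⟩ := aux_split Q H P hQ0 hH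
  rw [hAd, had, hBd, hbd] at hne hlow
  rw [hLsum, hHsum,
      aux_sub_decomp P Q N Z A a hP0 hQ0 hN hA hZ ha,
      aux_sub_decomp P Q B b A a hP0 hQ0 hB hA hb ha,
      aux_pair_lt Q _ _ _ _ (Nat.mod_lt _ hQ0) (Nat.mod_lt _ hQ0)]
  clear hLsum hHsum hL hH hAd had hBd hbd
  have hm1s := aux_mod_two' (N + P - A - (if Z < a then 1 else 0)) P hP0 (by split <;> omega)
  have hm2s := aux_mod_two' (B + P - A - (if b < a then 1 else 0)) P hP0 (by split <;> omega)
  have hr1s := aux_mod_two' (Q - a + Z) Q hQ0 (by omega)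
  have hr2s := aux_mod_two' (Q - a + b) Q hQ0 (by omega)
  have hs1s := aux_mod_two' (Q - (if A = N then a else 0) + Z) Q hQ0 (by split <;> omega)
  have hs2s := aux_mod_two' (Q - (if A = N then a else 0) + (if B = N then b else 0)) Q hQ0
    (by split <;> [skip; skip] <;> split <;> omega)
  split_ifs at hne hlow hm1s hm2s hs1s hs2s ⊢ <;> omega

private lemma aux_claim2 (P Q N L H Z : ℕ) (hP : 2 ≤ P) (hQ : 1 ≤ Q) (hN : N < P)
    (hL : L < P * Q) (hH : H < P * Q) (hZ : Z < Q)
    (heq : (if L / Q = N then L % Q else 0) = (if H / Q = N then H % Q else 0))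
    (hm0 : (P * Q - L + N * Q) % (P * Q) < (P * Q - L + H) % (P * Q)) :
    (P * Q - L + (N * Q + Z)) % (P * Q) < (P * Q - L + H) % (P * Q) := by
  have hQ0 : 0 < Q := hQ
  have hP0 : 0 < P := by omega
  obtain ⟨A, a, hAd, had, hLsum, hA, ha⟩ := aux_split Q L P hQ0 hL
  obtain ⟨B, b, hBd, hbd, hHsum, hB, hb⟩ := aux_split Q H P hQ0 hH
  rw [hAd, had, hBd, hbd] at heq
  rw [hLsum, hHsum, show N * Q = N * Q + 0 from (Nat.add_zero _).symm,
      aux_sub_decomp P Q N 0 A a hP0 hQ0 hN hA hQ0 ha,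
      aux_sub_decomp P Q B b A a hP0 hQ0 hB hA hb ha,
      aux_pair_lt Q _ _ _ _ (Nat.mod_lt _ hQ0) (Nat.mod_lt _ hQ0)] at hm0
  rw [hLsum, hHsum,
      aux_sub_decomp P Q N Z A a hP0 hQ0 hN hA hZ ha,
      aux_sub_decomp P Q B b A a hP0 hQ0 hB hA hb ha,
      aux_pair_lt Q _ _ _ _ (Nat.mod_lt _ hQ0) (Nat.mod_lt _ hQ0)]
  clear hLsum hHsum hL hH hAd had hBd hbd
  have hm0s := aux_mod_two' (N + P - A - (if 0 < a then 1 else 0)) P hP0 (by split <;> omega)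
  have hm1s := aux_mod_two' (N + P - A - (if Z < a then 1 else 0)) P hP0 (by split <;> omega)
  have hm2s := aux_mod_two' (B + P - A - (if b < a then 1 else 0)) P hP0 (by split <;> omega)
  have hr0s := aux_mod_two' (Q - a + 0) Q hQ0 (by omega)
  have hr1s := aux_mod_two' (Q - a + Z) Q hQ0 (by omega)
  have hr2s := aux_mod_two' (Q - a + b) Q hQ0 (by omega)
  split_ifs at heq hm0 hm0s hm1s hm2s ⊢ <;> omega

private lemma aux_append_toNat {u v : ℕ} (n : BitVec u) (z : BitVec v) :
    (n ++ z).toNat = n.toNat * 2 ^ v + z.toNat := by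
  rw [BitVec.toNat_append, Nat.shiftLeft_eq, Nat.mul_comm,
    ← Nat.two_pow_add_eq_or_of_lt z.isLt, Nat.mul_comm]

private lemma aux_inInterval_iff {w : ℕ} (t l h : BitVec w) :
    inInterval t l h ↔ (2 ^ w - l.toNat + t.toNat) % 2 ^ w
      < (2 ^ w - l.toNat + h.toNat) % 2 ^ w := by
  rw [inInterval, BitVec.lt_def, BitVec.toNat_sub, BitVec.toNat_sub]

private lemma aux_βz_toNat {u v : ℕ} (n : BitVec u) (β : BitVec (u + v)) :
    (βz n β).toNat = if β.toNat / 2 ^ v = n.toNat then β.toNat % 2 ^ v else 0 := by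
  rw [βz, apply_ite BitVec.toNat, BitVec.toNat_ofNat,
    Nat.mod_mod_of_dvd _ dvd_rfl]
  simp

/-- Projection of a forbidden interval when the high sub-slice is fixed to `n`. -/
theorem forbidden_interval_project_low_fixed_high (u v : ℕ) (hu : 1 ≤ u) (hv : 1 ≤ v)
    (n : BitVec u) (l h : BitVec (u + v)) :
    (βz (v := v) n l ≠ βz (v := v) n h →
      ∀ z : BitVec v, ¬ inInterval (n ++ z) l h →
        ¬ inInterval z (βz (v := v) n l) (βz (v := v) n h)) ∧
    (βz (v := v) n l = βz (v := v) n h →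
      inInterval (n ++ (0 : BitVec v)) l h →
        ∀ z : BitVec v, inInterval (n ++ z) l h) := by
  have hpow : (2 : ℕ) ^ (u + v) = 2 ^ u * 2 ^ v := pow_add 2 u v
  have hP : 2 ≤ 2 ^ u := by
    calc 2 = 2 ^ 1 := (pow_one 2).symm
    _ ≤ 2 ^ u := Nat.pow_le_pow_right (by norm_num) hu
  have hQ : 1 ≤ 2 ^ v := Nat.one_le_two_pow
  have hN : n.toNat < 2 ^ u := n.isLt
  have hL : l.toNat < 2 ^ u * 2 ^ v := by have := l.isLt; omega
  have hH : h.toNat < 2 ^ u * 2 ^ v := by have := h.isLt; omega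
  constructor
  · intro hne z hnot hcon
    apply hnot
    rw [aux_inInterval_iff, aux_βz_toNat, aux_βz_toNat] at hcon
    rw [aux_inInterval_iff, aux_append_toNat, hpow]
    exact aux_claim1 (2 ^ u) (2 ^ v) n.toNat l.toNat h.toNat z.toNat hP hQ hN hL hH
      z.isLt (fun hc => hne (BitVec.toNat_injective (by
        rw [aux_βz_toNat, aux_βz_toNat]; exact hc))) hcon
  · intro heq hm0 z
    rw [aux_inInterval_iff, aux_append_toNat, hpow] at hm0
    have h0 : ((0 : BitVec v)).toNat = 0 := by simp
    rw [h0, Nat.add_zero] at hm0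
    rw [aux_inInterval_iff, aux_append_toNat, hpow]
    have heq' : (if l.toNat / 2 ^ v = n.toNat then l.toNat % 2 ^ v else 0)
        = (if h.toNat / 2 ^ v = n.toNat then h.toNat % 2 ^ v else 0) := by
      have := congrArg BitVec.toNat heq
      rwa [aux_βz_toNat, aux_βz_toNat] at this
    exact aux_claim2 (2 ^ u) (2 ^ v) n.toNat l.toNat h.toNat z.toNat hP hQ hN hL hH
      z.isLt heq' hm0
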